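/- Let (A_n)_{n≥1} be a strictly stationary ergodic process of nonnegative column-allowable p×p matrices with E[max(log‖A₁‖,0)] < ∞, which is weakly sequentially primitive; assume the first two Lyapunov exponents λ₁, λ₂ exist as almost-sure limits of (1/n)log σ¹_n and (1/n)log σ²_n with λ₁ − λ₂ > 0, and assume the weak subexponentiality condition on ratios of entries of M_n. Then there exists a measurable random vector v¹ ∈ ℝ^p which almost surely has all coordinates strictly positive, such that for every x ∈ ℝ^p, every nonnegative nonzero w ∈ ℝ^p, and every i ∈ {1,…,p}, almost surely limsup_{n→∞, over those n with e_iᵀM_n ≠ 0} (1/n) log | (e_iᵀM_n x)/(e_iᵀM_n w) − (v¹·x)/(v¹·w) | ≤ −(λ₁ − λ₂). -/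

import Mathlib

open MeasureTheory Filter Matrix
open scoped ENNReal

/-- `elog x` is the extended-real logarithm of a nonnegative real number,
with `elog x = -∞` for `x ≤ 0`. -/
noncomputable def elog (x : ℝ) : EReal := if x ≤ 0 then ⊥ else ((Real.log x : ℝ) : EReal)

/-- `Mprod A n = A (n-1) * ⋯ * A 0`, i.e. the product `M_n = A_n A_{n-1} ⋯ A_1`
of the first `n` matrices of the (0-indexed) sequence `A`. -/
def Mprod {p : ℕ} (A : ℕ → Matrix (Fin p) (Fin p) ℝ) : ℕ → Matrix (Fin p) (Fin p) ℝ
  | 0 => 1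
  | n + 1 => A n * Mprod A n

/-- Every row of `M` is either strictly positive or identically zero. -/
def RowsPosOrZero {p : ℕ} (M : Matrix (Fin p) (Fin p) ℝ) : Prop :=
  ∀ i, (∀ j, 0 < M i j) ∨ (∀ j, M i j = 0)

/-- `A` is nonnegative and column-allowable: each column contains a strictly positive entry. -/
def ColAllowable {p : ℕ} (A : Matrix (Fin p) (Fin p) ℝ) : Prop :=
  (∀ i j, 0 ≤ A i j) ∧ ∀ j, ∃ i, 0 < A i j

/-- `M = U * S * V` is a singular value decomposition: `U, V` orthogonal and `S` diagonal
with nonnegative nonincreasing diagonal entries. -/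
def IsSVD {p : ℕ} (M U S V : Matrix (Fin p) (Fin p) ℝ) : Prop :=
  Uᵀ * U = 1 ∧ U * Uᵀ = 1 ∧ Vᵀ * V = 1 ∧ V * Vᵀ = 1 ∧
  (∀ i j, i ≠ j → S i j = 0) ∧ (∀ i, 0 ≤ S i i) ∧
  (∀ i j : Fin p, i ≤ j → S j j ≤ S i i) ∧ M = U * S * V

/-- A norm on matrices (all norms on a finite-dimensional space are equivalent). -/
noncomputable def matNorm {p : ℕ} (M : Matrix (Fin p) (Fin p) ℝ) : ℝ := ∑ i, ∑ j, |M i j|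

/-- Total variation norm of a vector: `‖v‖_TV = (1/2) ∑ i |v i|`. -/
noncomputable def tvNorm {p : ℕ} (v : Fin p → ℝ) : ℝ := (1 / 2) * ∑ i, |v i|

section Aux

variable {p : ℕ}

/-- Row sum. -/
def rsum (M : Matrix (Fin p) (Fin p) ℝ) (i : Fin p) : ℝ := ∑ j, M i j

/-- Total sum. -/
def tsum' (M : Matrix (Fin p) (Fin p) ℝ) : ℝ := ∑ i, ∑ j, M i j

/-- Normalized row. -/
noncomputable def nrow (M : Matrix (Fin p) (Fin p) ℝ) (i j : Fin p) : ℝ := M i j / rsum M i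

/-- Normalized column-sums vector. -/
noncomputable def nall (M : Matrix (Fin p) (Fin p) ℝ) (j : Fin p) : ℝ :=
  (∑ i, M i j) / tsum' M

lemma mprod_succ (A : ℕ → Matrix (Fin p) (Fin p) ℝ) (n : ℕ) :
    Mprod A (n + 1) = A n * Mprod A n := rfl

lemma mprod_nonneg {A : ℕ → Matrix (Fin p) (Fin p) ℝ} (hA : ∀ n, ColAllowable (A n)) :
    ∀ n i j, 0 ≤ Mprod A n i j := by
  intro n
  induction n with
  | zero =>
    intro i j
    show (0:ℝ) ≤ (1 : Matrix (Fin p) (Fin p) ℝ) i j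
    by_cases h : i = j <;> simp [Matrix.one_apply, h]
  | succ n ih =>
    intro i j
    rw [mprod_succ, Matrix.mul_apply]
    exact Finset.sum_nonneg fun k _ => mul_nonneg ((hA n).1 i k) (ih k j)

lemma mprod_col_pos {A : ℕ → Matrix (Fin p) (Fin p) ℝ} (hA : ∀ n, ColAllowable (A n)) :
    ∀ n j, ∃ i, 0 < Mprod A n i j := by
  intro n
  induction n with
  | zero =>
    intro j
    exact ⟨j, by simp [Mprod, Matrix.one_apply]⟩
  | succ n ih =>
    intro j
    obtain ⟨k, hk⟩ := ih j
    obtain ⟨i, hi⟩ := (hA n).2 k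
    refine ⟨i, ?_⟩
    rw [mprod_succ, Matrix.mul_apply]
    refine Finset.sum_pos' (fun l _ => mul_nonneg ((hA n).1 i l) (mprod_nonneg hA n l j)) ?_
    exact ⟨k, Finset.mem_univ k, mul_pos hi hk⟩

lemma mprod_factor {A : ℕ → Matrix (Fin p) (Fin p) ℝ} (hA : ∀ n, ColAllowable (A n))
    {n m : ℕ} (h : n ≤ m) :
    ∃ P : Matrix (Fin p) (Fin p) ℝ, (∀ i j, 0 ≤ P i j) ∧ Mprod A m = P * Mprod A n := by
  induction m with
  | zero =>
    have : n = 0 := Nat.le_zero.mp h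
    subst this
    exact ⟨1, fun i j => by by_cases hij : i = j <;> simp [Matrix.one_apply, hij], by simp⟩
  | succ m ih =>
    rcases Nat.lt_or_ge n (m+1) with hlt | hge
    · obtain ⟨P, hP, hPe⟩ := ih (Nat.lt_succ_iff.mp hlt)
      refine ⟨A m * P, fun i j => ?_, ?_⟩
      · rw [Matrix.mul_apply]
        exact Finset.sum_nonneg fun k _ => mul_nonneg ((hA m).1 i k) (hP k j)
      · rw [mprod_succ, hPe, Matrix.mul_assoc]
    · have : n = m + 1 := le_antisymm h hge
      subst this
      exact ⟨1, fun i j => by by_cases hij : i = j <;> simp [Matrix.one_apply, hij], by simp⟩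

lemma rowsPosOrZero_mul {B M : Matrix (Fin p) (Fin p) ℝ} (hB : ∀ i j, 0 ≤ B i j)
    (hM : ∀ i j, 0 ≤ M i j) (h : RowsPosOrZero M) : RowsPosOrZero (B * M) := by
  intro i
  by_cases hex : ∃ k, 0 < B i k ∧ ∀ j, 0 < M k j
  · obtain ⟨k, hk1, hk2⟩ := hex
    left
    intro j
    rw [Matrix.mul_apply]
    refine Finset.sum_pos' (fun l _ => mul_nonneg (hB i l) (hM l j)) ?_
    exact ⟨k, Finset.mem_univ k, mul_pos hk1 (hk2 j)⟩
  · push_neg at hex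
    right
    intro j
    rw [Matrix.mul_apply]
    refine Finset.sum_eq_zero fun k _ => ?_
    rcases eq_or_lt_of_le (hB i k) with hk | hk
    · rw [← hk, zero_mul]
    · rcases h k with hpos | hzero
      · obtain ⟨j', hj'⟩ := hex k hk
        exact absurd (hpos j') (not_lt.mpr hj')
      · rw [hzero j, mul_zero]

/-- rows of `Mprod` are pos-or-zero from time `τ0` on. -/
lemma mprod_rowsPosOrZero {A : ℕ → Matrix (Fin p) (Fin p) ℝ} (hA : ∀ n, ColAllowable (A n))
    {τ0 : ℕ} (hτ : RowsPosOrZero (Mprod A τ0)) {n : ℕ} (h : τ0 ≤ n) :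
    RowsPosOrZero (Mprod A n) := by
  obtain ⟨P, hP, hPe⟩ := mprod_factor hA h
  rw [hPe]
  exact rowsPosOrZero_mul hP (mprod_nonneg hA τ0) hτ

lemma rsum_nonneg {M : Matrix (Fin p) (Fin p) ℝ} (hM : ∀ i j, 0 ≤ M i j) (i : Fin p) :
    0 ≤ rsum M i := Finset.sum_nonneg fun j _ => hM i j

lemma row_eq_zero_of_rsum {M : Matrix (Fin p) (Fin p) ℝ} (hM : ∀ i j, 0 ≤ M i j) {i : Fin p}
    (h : rsum M i = 0) : ∀ j, M i j = 0 := by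
  intro j
  have := (Finset.sum_eq_zero_iff_of_nonneg (fun j _ => hM i j)).mp h
  exact this j (Finset.mem_univ j)

lemma key_ident {M : Matrix (Fin p) (Fin p) ℝ} (hM : ∀ i j, 0 ≤ M i j) (i j : Fin p) :
    M i j = rsum M i * nrow M i j := by
  by_cases h : rsum M i = 0
  · rw [row_eq_zero_of_rsum hM h j, h, zero_mul]
  · rw [nrow, mul_div_cancel₀ _ h]

lemma tsum'_eq (M : Matrix (Fin p) (Fin p) ℝ) : tsum' M = ∑ i, rsum M i := rfl

end Aux

section Hull

variable {p : ℕ}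

/-- `y` is a convex combination of the normalized nonzero rows of `M`. -/
def InHull (M : Matrix (Fin p) (Fin p) ℝ) (y : Fin p → ℝ) : Prop :=
  ∃ μ : Fin p → ℝ, (∀ k, 0 ≤ μ k) ∧ (∑ k, μ k) = 1 ∧ (∀ k, rsum M k = 0 → μ k = 0) ∧
    ∀ j, y j = ∑ k, μ k * nrow M k j

lemma inHull_nrow {M : Matrix (Fin p) (Fin p) ℝ} {i : Fin p}
    (hi : rsum M i ≠ 0) : InHull M (nrow M i) := by
  refine ⟨fun k => if k = i then 1 else 0, fun k => by positivity, by simp, fun k hk => ?_,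
    fun j => ?_⟩
  · simp only [ite_eq_right_iff, one_ne_zero]
    intro h; exact absurd (h ▸ hk) hi
  · rw [Finset.sum_eq_single i (fun k _ hk => by simp [hk]) (by simp)]
    simp

lemma rsum_mul {P M : Matrix (Fin p) (Fin p) ℝ} (i : Fin p) :
    rsum (P * M) i = ∑ k, P i k * rsum M k := by
  unfold rsum
  simp only [Matrix.mul_apply, Finset.mul_sum]
  rw [Finset.sum_comm]

lemma inHull_nrow_mul {P M : Matrix (Fin p) (Fin p) ℝ} (hP : ∀ i j, 0 ≤ P i j)
    (hM : ∀ i j, 0 ≤ M i j) {i : Fin p} (hi : rsum (P * M) i ≠ 0) :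
    InHull M (nrow (P * M) i) := by
  have hrs : rsum (P * M) i = ∑ k, P i k * rsum M k := rsum_mul i
  have hpos : 0 < rsum (P * M) i :=
    lt_of_le_of_ne (rsum_nonneg (fun a b => by
      rw [Matrix.mul_apply]; exact Finset.sum_nonneg fun k _ => mul_nonneg (hP a k) (hM k b)) i)
      (Ne.symm hi)
  refine ⟨fun k => P i k * rsum M k / rsum (P * M) i, fun k => ?_, ?_, fun k hk => by simp [hk],
    fun j => ?_⟩
  · exact div_nonneg (mul_nonneg (hP i k) (rsum_nonneg hM k)) hpos.le
  · rw [← Finset.sum_div, ← hrs, div_self hi]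
  · rw [nrow, Matrix.mul_apply]
    rw [Finset.sum_div]
    refine Finset.sum_congr rfl fun k _ => ?_
    rw [key_ident hM k j]
    ring

lemma inHull_nall {M : Matrix (Fin p) (Fin p) ℝ} (hM : ∀ i j, 0 ≤ M i j)
    (ht : tsum' M ≠ 0) : InHull M (nall M) := by
  have hpos : 0 < tsum' M := by
    refine lt_of_le_of_ne ?_ (Ne.symm ht)
    exact Finset.sum_nonneg fun i _ => rsum_nonneg hM i
  refine ⟨fun k => rsum M k / tsum' M, fun k => div_nonneg (rsum_nonneg hM k) hpos.le, ?_,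
    fun k hk => by simp [hk], fun j => ?_⟩
  · rw [← Finset.sum_div, ← tsum'_eq, div_self ht]
  · rw [nall, Finset.sum_div]
    refine Finset.sum_congr rfl fun k _ => ?_
    rw [key_ident hM k j]
    ring

lemma inHull_nall_mul {P M : Matrix (Fin p) (Fin p) ℝ} (hP : ∀ i j, 0 ≤ P i j)
    (hM : ∀ i j, 0 ≤ M i j) (ht : tsum' (P * M) ≠ 0) :
    InHull M (nall (P * M)) := by
  have hrs : tsum' (P * M) = ∑ k, (∑ i, P i k) * rsum M k := by
    rw [tsum'_eq]
    simp only [rsum_mul]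
    rw [Finset.sum_comm]
    exact Finset.sum_congr rfl fun k _ => by rw [Finset.sum_mul]
  have hpos : 0 < tsum' (P * M) := by
    refine lt_of_le_of_ne ?_ (Ne.symm ht)
    refine Finset.sum_nonneg fun i _ => rsum_nonneg (fun a b => ?_) i
    rw [Matrix.mul_apply]; exact Finset.sum_nonneg fun k _ => mul_nonneg (hP a k) (hM k b)
  refine ⟨fun k => (∑ i, P i k) * rsum M k / tsum' (P * M), fun k => ?_, ?_,
    fun k hk => by simp [hk], fun j => ?_⟩
  · exact div_nonneg (mul_nonneg (Finset.sum_nonneg fun i _ => hP i k) (rsum_nonneg hM k))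
      hpos.le
  · rw [← Finset.sum_div, ← hrs, div_self ht]
  · have h2 : ∑ i, (P * M) i j = ∑ k, (∑ i, P i k) * M k j := by
      simp only [Matrix.mul_apply]
      rw [Finset.sum_comm]
      exact Finset.sum_congr rfl fun k _ => by rw [Finset.sum_mul]
    rw [nall, h2, Finset.sum_div]
    refine Finset.sum_congr rfl fun k _ => ?_
    rw [key_ident hM k j]
    ring

lemma double_sum_expand {p : ℕ} (μ ν a : Fin p → ℝ) :
    (∑ k, μ k * a k) * (∑ l, ν l) - (∑ k, μ k) * (∑ l, ν l * a l)
      = ∑ k, ∑ l, μ k * ν l * (a k - a l) := by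
  rw [Finset.sum_mul, Finset.sum_mul, ← Finset.sum_sub_distrib]
  refine Finset.sum_congr rfl fun k _ => ?_
  rw [Finset.mul_sum, Finset.mul_sum, ← Finset.sum_sub_distrib]
  exact Finset.sum_congr rfl fun l _ => by ring

lemma hull_diff_bound {M : Matrix (Fin p) (Fin p) ℝ} {d : ℝ}
    (hd : ∀ k l j, rsum M k ≠ 0 → rsum M l ≠ 0 → |nrow M k j - nrow M l j| ≤ d)
    {y z : Fin p → ℝ} (hy : InHull M y) (hz : InHull M z) (j : Fin p) :
    |y j - z j| ≤ d := by
  obtain ⟨μ, hμ0, hμ1, hμs, hμe⟩ := hy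
  obtain ⟨ν, hν0, hν1, hνs, hνe⟩ := hz
  have hrepr : y j - z j = ∑ k, ∑ l, μ k * ν l * (nrow M k j - nrow M l j) := by
    rw [← double_sum_expand μ ν (fun k => nrow M k j), hμ1, hν1, hμe j, hνe j]
    ring
  rw [hrepr]
  calc |∑ k, ∑ l, μ k * ν l * (nrow M k j - nrow M l j)|
      ≤ ∑ k, |∑ l, μ k * ν l * (nrow M k j - nrow M l j)| := Finset.abs_sum_le_sum_abs _ _
    _ ≤ ∑ k, ∑ l, |μ k * ν l * (nrow M k j - nrow M l j)| :=
        Finset.sum_le_sum fun k _ => Finset.abs_sum_le_sum_abs _ _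
    _ ≤ ∑ k, ∑ l, μ k * ν l * d := by
        refine Finset.sum_le_sum fun k _ => Finset.sum_le_sum fun l _ => ?_
        by_cases hk : rsum M k = 0
        · simp [hμs k hk]
        by_cases hl : rsum M l = 0
        · simp [hνs l hl]
        · rw [abs_mul, abs_of_nonneg (mul_nonneg (hμ0 k) (hν0 l))]
          exact mul_le_mul_of_nonneg_left (hd k l j hk hl) (mul_nonneg (hμ0 k) (hν0 l))
    _ = d := by
        have hin : ∀ k : Fin p, ∑ l, μ k * ν l * d = μ k * d := by
          intro k
          rw [← Finset.sum_mul, ← Finset.mul_sum, hν1, mul_one]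
        simp only [hin]
        rw [← Finset.sum_mul, hμ1, one_mul]

end Hull

section LemB

variable {p : ℕ}

lemma entry_abs_le_one_of_orthonormal_rows {U : Matrix (Fin p) (Fin p) ℝ}
    (h : U * Uᵀ = 1) (a b : Fin p) : |U a b| ≤ 1 := by
  have h1 : ∑ c, U a c * U a c = 1 := by
    have := congrFun (congrFun h a) a
    rw [Matrix.mul_apply] at this
    simpa [Matrix.transpose_apply, Matrix.one_apply] using this
  have h2 : U a b * U a b ≤ 1 := by
    rw [← h1]
    exact Finset.single_le_sum (fun c _ => mul_self_nonneg (U a c)) (Finset.mem_univ b)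
  exact abs_le_one_iff_mul_self_le_one.mpr h2

set_option maxHeartbeats 2000000 in
lemma lemB (hp : 2 ≤ p) {M U S V : Matrix (Fin p) (Fin p) ℝ} (hsvd : IsSVD M U S V)
    (hnn : ∀ i j, 0 ≤ M i j) (hrz : RowsPosOrZero M) (hM0 : ∃ a b, 0 < M a b)
    {t : ℝ} (ht : 1 ≤ t) (hcomp : ∀ i j k, M j k = 0 ∨ M i k ≤ t * M j k)
    {i i' : Fin p} (hi : rsum M i ≠ 0) (hi' : rsum M i' ≠ 0) (j : Fin p) :
    |nrow M i j - nrow M i' j| ≤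
      (100 * (p:ℝ)^7) * t^2 * (S ⟨1, lt_of_lt_of_le (by norm_num) hp⟩ ⟨1, lt_of_lt_of_le (by norm_num) hp⟩ / S ⟨0, lt_of_lt_of_le (by norm_num) hp⟩ ⟨0, lt_of_lt_of_le (by norm_num) hp⟩) := by
  obtain ⟨hUtU, hUUt, hVtV, hVVt, hSdiag, hSnn, hSmono, hM⟩ := hsvd
  set i0 : Fin p := ⟨0, lt_of_lt_of_le (by norm_num) hp⟩ with hi0
  set i1 : Fin p := ⟨1, lt_of_lt_of_le (by norm_num) hp⟩ with hi1
  set σ1 : ℝ := S i0 i0 with hσ1def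
  set σ2 : ℝ := S i1 i1 with hσ2def
  clear_value i0 i1 σ1 σ2
  have hpR : (1:ℝ) ≤ (p:ℝ) := by exact_mod_cast Nat.one_le_of_lt hp
  have ht0 : (0:ℝ) < t := lt_of_lt_of_le one_pos ht
  -- |U a b| ≤ 1, |V a b| ≤ 1
  have hU : ∀ a b, |U a b| ≤ 1 := entry_abs_le_one_of_orthonormal_rows hUUt
  have hV : ∀ a b, |V a b| ≤ 1 := entry_abs_le_one_of_orthonormal_rows hVVt
  -- M entries expansion
  have hMelem : ∀ a b, M a b = ∑ c, U a c * S c c * V c b := by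
    intro a b
    rw [hM, Matrix.mul_apply]
    refine Finset.sum_congr rfl fun c _ => ?_
    rw [Matrix.mul_apply]
    rw [Finset.sum_eq_single c (fun d _ hd => by rw [hSdiag d c hd, mul_zero]) (by simp)]
  have hS1le : ∀ c : Fin p, S c c ≤ σ1 := fun c => by
    rw [hσ1def]; exact hSmono i0 c (by simp [hi0, Fin.le_def])
  have hS2le : ∀ c : Fin p, c ≠ i0 → S c c ≤ σ2 := by
    intro c hc
    rw [hσ2def]
    refine hSmono i1 c ?_
    have : c.val ≠ 0 := fun h => hc (by rw [hi0]; exact Fin.ext h)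
    simp [hi1, Fin.le_def]
    omega
  have hσ1nn : 0 ≤ σ1 := by rw [hσ1def]; exact hSnn i0
  have hσ2nn : 0 ≤ σ2 := by rw [hσ2def]; exact hSnn i1
  have hσ21 : σ2 ≤ σ1 := by
    rw [hσ1def, hσ2def]; exact hSmono i0 i1 (by simp [hi0, hi1, Fin.le_def])
  -- entry bound
  have hentry : ∀ a b, M a b ≤ (p:ℝ) * σ1 := by
    intro a b
    rw [hMelem a b]
    calc ∑ c, U a c * S c c * V c b ≤ ∑ _c : Fin p, σ1 := by
          refine Finset.sum_le_sum fun c _ => ?_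
          calc U a c * S c c * V c b ≤ |U a c * S c c * V c b| := le_abs_self _
            _ = |U a c| * S c c * |V c b| := by
                rw [abs_mul, abs_mul, abs_of_nonneg (hSnn c)]
            _ ≤ 1 * σ1 * 1 := by
                apply mul_le_mul (mul_le_mul (hU a c) (hS1le c) (hSnn c) zero_le_one)
                  (hV c b) (abs_nonneg _) (mul_nonneg zero_le_one hσ1nn)
            _ = σ1 := by ring
      _ = (p:ℝ) * σ1 := by simp [Finset.sum_const]
  -- max entry
  obtain ⟨q0, hq0⟩ : ∃ q0 : Fin p × Fin p, ∀ r : Fin p × Fin p, M r.1 r.2 ≤ M q0.1 q0.2 := by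
    have : Nonempty (Fin p × Fin p) := ⟨⟨i0, i0⟩⟩
    exact Finite.exists_max _
  set mm : ℝ := M q0.1 q0.2 with hmm
  clear_value mm
  have hmmpos : 0 < mm := by
    obtain ⟨a, b, hab⟩ := hM0
    exact lt_of_lt_of_le hab (hq0 ⟨a, b⟩)
  have hσ1pos : 0 < σ1 := by
    by_contra h
    push_neg at h
    have := hentry q0.1 q0.2
    nlinarith
  -- σ1 ≤ total sum
  have hSeq : Uᵀ * M * Vᵀ = S := by
    rw [hM]
    calc Uᵀ * (U * S * V) * Vᵀ = (Uᵀ * U) * (S * V) * Vᵀ := by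
          rw [Matrix.mul_assoc U S V, Matrix.mul_assoc Uᵀ U (S * V)]
      _ = S * (V * Vᵀ) := by rw [hUtU, Matrix.one_mul, Matrix.mul_assoc]
      _ = S := by rw [hVVt, Matrix.mul_one]
  have hσ1ts : σ1 ≤ ∑ a, ∑ b, M a b := by
    have h1 : σ1 = ∑ a, U a i0 * (∑ b, M a b * V i0 b) := by
      conv_lhs => rw [hσ1def, ← hSeq]
      rw [Matrix.mul_assoc, Matrix.mul_apply]
      refine Finset.sum_congr rfl fun a _ => ?_
      rw [Matrix.transpose_apply, Matrix.mul_apply]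
      simp [Matrix.transpose_apply]
    rw [h1]
    calc ∑ a, U a i0 * (∑ b, M a b * V i0 b) ≤ ∑ a, |U a i0 * (∑ b, M a b * V i0 b)| :=
          Finset.sum_le_sum fun a _ => le_abs_self _
      _ ≤ ∑ a, ∑ b, M a b := by
          refine Finset.sum_le_sum fun a _ => ?_
          rw [abs_mul]
          calc |U a i0| * |∑ b, M a b * V i0 b| ≤ 1 * (∑ b, M a b) := by
                refine mul_le_mul (hU a i0) ?_ (abs_nonneg _) zero_le_one
                calc |∑ b, M a b * V i0 b| ≤ ∑ b, |M a b * V i0 b| :=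
                      Finset.abs_sum_le_sum_abs _ _
                  _ ≤ ∑ b, M a b := by
                      refine Finset.sum_le_sum fun b _ => ?_
                      rw [abs_mul, abs_of_nonneg (hnn a b)]
                      calc M a b * |V i0 b| ≤ M a b * 1 :=
                            mul_le_mul_of_nonneg_left (hV i0 b) (hnn a b)
                        _ = M a b := mul_one _
            _ = ∑ b, M a b := one_mul _
  have hts_le : (∑ a, ∑ b, M a b) ≤ (p:ℝ)^2 * mm := by
    calc (∑ a, ∑ b, M a b) ≤ ∑ _a : Fin p, ∑ _b : Fin p, mm :=
          Finset.sum_le_sum fun a _ => Finset.sum_le_sum fun b _ => hq0 ⟨a, b⟩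
      _ = (p:ℝ)^2 * mm := by simp [Finset.sum_const]; ring
  have hmmge : σ1 / (p:ℝ)^2 ≤ mm := by
    rw [div_le_iff₀ (by positivity)]
    calc σ1 ≤ ∑ a, ∑ b, M a b := hσ1ts
      _ ≤ (p:ℝ)^2 * mm := hts_le
      _ = mm * (p:ℝ)^2 := by ring
  -- row sum lower bound
  have hrow_lb : ∀ a : Fin p, rsum M a ≠ 0 → σ1 / ((p:ℝ)^2 * t) ≤ rsum M a := by
    intro a ha
    have hposrow : ∀ b, 0 < M a b := by
      rcases hrz a with h | h
      · exact h
      · exact absurd (Finset.sum_eq_zero fun b _ => h b) ha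
    have hc := hcomp q0.1 a q0.2
    rcases hc with h | h
    · exact absurd h (ne_of_gt (hposrow q0.2))
    · have hMa : mm / t ≤ M a q0.2 := by
        rw [div_le_iff₀ ht0]
        linarith [h]
      calc σ1 / ((p:ℝ)^2 * t) = (σ1 / (p:ℝ)^2) / t := by rw [div_div]
        _ ≤ mm / t := (div_le_div_iff_of_pos_right ht0).mpr hmmge
        _ ≤ M a q0.2 := hMa
        _ ≤ rsum M a := Finset.single_le_sum (fun b _ => (hposrow b).le) (Finset.mem_univ q0.2)
  -- decomposition into rank-one part plus error
  set q : Fin p → ℝ := fun b => V i0 b with hqdef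
  set al : Fin p → ℝ := fun a => U a i0 * σ1 with haldef
  set E : Fin p → Fin p → ℝ := fun a b => M a b - al a * q b with hEdef
  clear_value q al E
  have hqb : ∀ b, |q b| ≤ 1 := fun b => by rw [hqdef]; exact hV i0 b
  have hMdec : ∀ a b, M a b = al a * q b + E a b := fun a b => by
    simp only [hEdef]
    ring
  have hEbound : ∀ a b, |E a b| ≤ (p:ℝ) * σ2 := by
    intro a b
    have hEe : E a b = ∑ c ∈ Finset.univ.erase i0, U a c * S c c * V c b := by
      have h1 : M a b = U a i0 * S i0 i0 * V i0 b
          + ∑ c ∈ Finset.univ.erase i0, U a c * S c c * V c b := by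
        rw [hMelem a b, ← Finset.add_sum_erase _ _ (Finset.mem_univ i0)]
      have h2 : E a b = M a b - U a i0 * σ1 * V i0 b := by
        simp only [hEdef, haldef, hqdef]
      rw [hσ1def] at h2
      rw [h2, h1]
      ring
    calc |E a b| ≤ ∑ c ∈ Finset.univ.erase i0, |U a c * S c c * V c b| := by
          rw [hEe]; exact Finset.abs_sum_le_sum_abs _ _
      _ ≤ ∑ _c ∈ Finset.univ.erase i0, σ2 := by
          refine Finset.sum_le_sum fun c hc => ?_
          have hcne : c ≠ i0 := Finset.ne_of_mem_erase hc
          rw [abs_mul, abs_mul, abs_of_nonneg (hSnn c)]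
          calc |U a c| * S c c * |V c b| ≤ 1 * σ2 * 1 := by
                apply mul_le_mul (mul_le_mul (hU a c) (hS2le c hcne) (hSnn c) zero_le_one)
                  (hV c b) (abs_nonneg _) (mul_nonneg zero_le_one hσ2nn)
            _ = σ2 := by ring
      _ = ((Finset.univ.erase i0).card : ℝ) * σ2 := by rw [Finset.sum_const, nsmul_eq_mul]
      _ ≤ (p:ℝ) * σ2 := by
          refine mul_le_mul_of_nonneg_right ?_ hσ2nn
          have hcard : (Finset.univ.erase i0).card ≤ p :=
            le_trans (Finset.card_erase_le) (by simp)
          exact_mod_cast hcard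
  set Q : ℝ := ∑ b, q b with hQdef
  set F : Fin p → ℝ := fun a => ∑ b, E a b with hFdef
  clear_value Q F
  have hQb : |Q| ≤ (p:ℝ) := by
    calc |Q| ≤ ∑ b, |q b| := by rw [hQdef]; exact Finset.abs_sum_le_sum_abs _ _
      _ ≤ ∑ _b : Fin p, (1:ℝ) := Finset.sum_le_sum fun b _ => hqb b
      _ = (p:ℝ) := by simp
  have hFb : ∀ a, |F a| ≤ (p:ℝ)^2 * σ2 := by
    intro a
    calc |F a| ≤ ∑ b, |E a b| := by simp only [hFdef]; exact Finset.abs_sum_le_sum_abs _ _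
      _ ≤ ∑ _b : Fin p, (p:ℝ) * σ2 := Finset.sum_le_sum fun b _ => hEbound a b
      _ = (p:ℝ)^2 * σ2 := by simp [Finset.sum_const]; ring
  have hrs_dec : ∀ a, rsum M a = al a * Q + F a := by
    intro a
    rw [rsum]
    calc ∑ b, M a b = ∑ b, (al a * q b + E a b) :=
          Finset.sum_congr rfl fun b _ => hMdec a b
      _ = al a * Q + F a := by
          rw [Finset.sum_add_distrib, ← Finset.mul_sum]
          simp only [hQdef, hFdef]
  have halb : ∀ a, |al a| ≤ σ1 := by
    intro a
    have hala : |al a| = |U a i0| * σ1 := by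
      simp only [haldef]
      rw [abs_mul, abs_of_nonneg hσ1nn]
    rw [hala]
    calc |U a i0| * σ1 ≤ 1 * σ1 := mul_le_mul_of_nonneg_right (hU a i0) hσ1nn
      _ = σ1 := one_mul _
  -- numerator estimate
  set N : ℝ := M i j * rsum M i' - M i' j * rsum M i with hNdef
  clear_value N
  have hNid : N = al i * q j * F i' - al i' * q j * F i + (al i' * E i j * Q - al i * E i' j * Q)
      + (E i j * F i' - E i' j * F i) := by
    rw [hNdef, hMdec i j, hMdec i' j, hrs_dec i, hrs_dec i']
    ring
  have habs_sub : ∀ x y : ℝ, |x - y| ≤ |x| + |y| := fun x y => by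
    rw [sub_eq_add_neg]
    exact (abs_add_le _ _).trans (by rw [abs_neg])
  have tb : ∀ x y z bx bb bz : ℝ, |x| ≤ bx → |y| ≤ bb → |z| ≤ bz → |x*y*z| ≤ bx*bb*bz := by
    intro x y z bx bb bz hx hy hz
    rw [abs_mul, abs_mul]
    have h0x : (0:ℝ) ≤ bx := (abs_nonneg _).trans hx
    have h0y : (0:ℝ) ≤ bb := (abs_nonneg _).trans hy
    exact mul_le_mul (mul_le_mul hx hy (abs_nonneg _) h0x) hz (abs_nonneg _)
      (mul_nonneg h0x h0y)
  have hterm1 : |al i * q j * F i'| ≤ σ1 * 1 * ((p:ℝ)^2 * σ2) := tb _ _ _ _ _ _ (halb i) (hqb j) (hFb i')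
  have hterm2 : |al i' * q j * F i| ≤ σ1 * 1 * ((p:ℝ)^2 * σ2) := tb _ _ _ _ _ _ (halb i') (hqb j) (hFb i)
  have hterm3 : |al i' * E i j * Q| ≤ σ1 * ((p:ℝ) * σ2) * (p:ℝ) := tb _ _ _ _ _ _ (halb i') (hEbound i j) hQb
  have hterm4 : |al i * E i' j * Q| ≤ σ1 * ((p:ℝ) * σ2) * (p:ℝ) := tb _ _ _ _ _ _ (halb i) (hEbound i' j) hQb
  have hterm5 : |E i j * F i'| ≤ ((p:ℝ) * σ2) * ((p:ℝ)^2 * σ2) := by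
    rw [abs_mul]
    exact mul_le_mul (hEbound i j) (hFb i') (abs_nonneg _) (by positivity)
  have hterm6 : |E i' j * F i| ≤ ((p:ℝ) * σ2) * ((p:ℝ)^2 * σ2) := by
    rw [abs_mul]
    exact mul_le_mul (hEbound i' j) (hFb i) (abs_nonneg _) (by positivity)
  have hN : |N| ≤ 6 * (p:ℝ)^3 * σ1 * σ2 := by
    have step : |N| ≤ |al i * q j * F i' - al i' * q j * F i|
        + |al i' * E i j * Q - al i * E i' j * Q| + |E i j * F i' - E i' j * F i| := by
      rw [hNid]
      exact le_trans (abs_add_le _ _) (add_le_add_left (abs_add_le _ _) _)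
    have s1 := (habs_sub (al i * q j * F i') (al i' * q j * F i))
    have s2 := (habs_sub (al i' * E i j * Q) (al i * E i' j * Q))
    have s3 := (habs_sub (E i j * F i') (E i' j * F i))
    have hss : 0 ≤ σ1 * σ2 := mul_nonneg hσ1nn hσ2nn
    have hp23 : (p:ℝ)^2 ≤ (p:ℝ)^3 := by nlinarith [hpR]
    have e1 : σ1 * 1 * ((p:ℝ)^2 * σ2) ≤ (p:ℝ)^3 * (σ1 * σ2) := by nlinarith [hp23, hss]
    have e2 : σ1 * ((p:ℝ) * σ2) * (p:ℝ) ≤ (p:ℝ)^3 * (σ1 * σ2) := by nlinarith [hp23, hss]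
    have e3 : ((p:ℝ) * σ2) * ((p:ℝ)^2 * σ2) ≤ (p:ℝ)^3 * (σ1 * σ2) := by
      nlinarith [mul_nonneg (sub_nonneg.mpr hσ21) hσ2nn,
        pow_nonneg (by positivity : (0:ℝ) ≤ (p:ℝ)) 3]
    linarith [step, s1, s2, s3, hterm1, hterm2, hterm3, hterm4, hterm5, hterm6, e1, e2, e3]
  -- put it together
  set rlb : ℝ := σ1 / ((p:ℝ)^2 * t) with hrlbdef
  clear_value rlb
  have hrlbpos : 0 < rlb := by rw [hrlbdef]; positivity
  have hRi : rlb ≤ rsum M i := hrow_lb i hi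
  have hRi' : rlb ≤ rsum M i' := hrow_lb i' hi'
  have hRipos : 0 < rsum M i := lt_of_lt_of_le hrlbpos hRi
  have hRi'pos : 0 < rsum M i' := lt_of_lt_of_le hrlbpos hRi'
  have hdiff : nrow M i j - nrow M i' j = N / (rsum M i * rsum M i') := by
    rw [nrow, nrow, div_sub_div _ _ hi hi', hNdef]
    ring
  have habs : |nrow M i j - nrow M i' j| = |N| / (rsum M i * rsum M i') := by
    rw [hdiff, abs_div, abs_of_pos (mul_pos hRipos hRi'pos)]
  rw [habs]
  calc |N| / (rsum M i * rsum M i') ≤ (6 * (p:ℝ)^3 * σ1 * σ2) / (rlb * rlb) := by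
        apply div_le_div₀ (by positivity) hN (by positivity)
        exact mul_le_mul hRi hRi' hrlbpos.le hRipos.le
    _ = 6 * (p:ℝ)^7 * t^2 * (σ2 / σ1) := by
        rw [hrlbdef]
        field_simp
    _ ≤ (100 * (p:ℝ)^7) * t^2 * (σ2 / σ1) := by
        have h1 : 0 ≤ t^2 * (σ2/σ1) := by positivity
        have hpow : (0:ℝ) ≤ (p:ℝ)^7 := by positivity
        nlinarith [h1, hpow]

end LemB

section ELogHelpers

lemma elog_mono {x y : ℝ} (h : x ≤ y) : elog x ≤ elog y := by
  unfold elog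
  by_cases hx : x ≤ 0
  · simp [hx]
  · have hy : ¬ y ≤ 0 := fun hy' => hx (h.trans hy')
    rw [if_neg hx, if_neg hy]
    rw [EReal.coe_le_coe_iff]
    exact (Real.log_le_log_iff (lt_of_not_ge hx) (lt_of_not_ge hy)).mpr h

lemma elog_exp (x : ℝ) : elog (Real.exp x) = (x : EReal) := by
  unfold elog
  rw [if_neg (not_le.mpr (Real.exp_pos x)), Real.log_exp]

lemma aux_lower {b : ℝ} {n : ℕ} (hn : 1 ≤ n) {x : ℝ}
    (h : (b : EReal) < (((n : ℝ)⁻¹ : ℝ) : EReal) * elog x) : Real.exp (b * n) ≤ x := by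
  by_contra hcon
  push_neg at hcon
  have hnR : (0:ℝ) < (n : ℝ) := by exact_mod_cast hn
  have h1 : elog x ≤ ((b * n : ℝ) : EReal) :=
    (elog_mono hcon.le).trans_eq (elog_exp _)
  have h2 : (((n : ℝ)⁻¹ : ℝ) : EReal) * elog x ≤ (((n : ℝ)⁻¹ : ℝ) : EReal) * ((b * n : ℝ) : EReal) :=
    mul_le_mul_of_nonneg_left h1 (by exact_mod_cast (inv_nonneg.mpr hnR.le))
  rw [← EReal.coe_mul] at h2
  have h3 : (n : ℝ)⁻¹ * (b * n) = b := by field_simp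
  rw [h3] at h2
  exact absurd (h.trans_le h2) (lt_irrefl _)

lemma aux_upper {b : ℝ} {n : ℕ} (hn : 1 ≤ n) {x : ℝ} (hx : 0 ≤ x)
    (h : (((n : ℝ)⁻¹ : ℝ) : EReal) * elog x < (b : EReal)) : x ≤ Real.exp (b * n) := by
  by_contra hcon
  push_neg at hcon
  have hnR : (0:ℝ) < (n : ℝ) := by exact_mod_cast hn
  have h1 : ((b * n : ℝ) : EReal) ≤ elog x := (elog_exp (b * n)) ▸ elog_mono hcon.le
  have h2 : (((n : ℝ)⁻¹ : ℝ) : EReal) * ((b * n : ℝ) : EReal)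
      ≤ (((n : ℝ)⁻¹ : ℝ) : EReal) * elog x :=
    mul_le_mul_of_nonneg_left h1 (by exact_mod_cast (inv_nonneg.mpr hnR.le))
  rw [← EReal.coe_mul] at h2
  have h3 : (n : ℝ)⁻¹ * (b * n) = b := by field_simp
  rw [h3] at h2
  exact absurd (h2.trans_lt h) (lt_irrefl _)

lemma limsup_aux {F : Filter ℕ} (hF : F ≤ Filter.atTop) (u : ℕ → EReal) {K β : ℝ}
    (h : ∀ᶠ n in F, u n ≤ (((n : ℝ)⁻¹ * Real.log K + β : ℝ) : EReal)) :
    Filter.limsup u F ≤ (β : EReal) := by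
  have hg : Filter.Tendsto (fun n : ℕ => (((n : ℝ)⁻¹ * Real.log K + β : ℝ) : EReal))
      Filter.atTop (nhds (β : EReal)) := by
    rw [EReal.tendsto_coe]
    have h0 : Filter.Tendsto (fun n : ℕ => (n : ℝ)⁻¹ * Real.log K + β) Filter.atTop
        (nhds (0 * Real.log K + β)) :=
      (tendsto_inv_atTop_nhds_zero_nat.mul_const _).add_const β
    simpa using h0
  calc Filter.limsup u F
      ≤ Filter.limsup (fun n : ℕ => (((n : ℝ)⁻¹ * Real.log K + β : ℝ) : EReal)) F :=
        Filter.limsup_le_limsup h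
    _ ≤ Filter.limsup (fun n : ℕ => (((n : ℝ)⁻¹ * Real.log K + β : ℝ) : EReal)) Filter.atTop :=
        Filter.limsup_le_limsup_of_le hF
    _ = (β : EReal) := hg.limsup_eq

end ELogHelpers

section Core

open Filter

set_option maxHeartbeats 2000000 in
lemma core {p : ℕ} (hp : 2 ≤ p) (A : ℕ → Matrix (Fin p) (Fin p) ℝ)
    (hA : ∀ n, ColAllowable (A n)) (τ0 : ℕ) (hτ : RowsPosOrZero (Mprod A τ0))
    (S : ℕ → Matrix (Fin p) (Fin p) ℝ)
    (hS : ∀ n, ∃ U V, IsSVD (Mprod A n) U (S n) V)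
    (L1 : ℝ) (lam2 : EReal)
    (hl1 : Filter.Tendsto (fun n : ℕ => (((n : ℝ)⁻¹ : ℝ) : EReal) *
      elog (S n ⟨0, lt_of_lt_of_le (by norm_num) hp⟩ ⟨0, lt_of_lt_of_le (by norm_num) hp⟩)) Filter.atTop (nhds (L1 : EReal)))
    (hl2 : Filter.Tendsto (fun n : ℕ => (((n : ℝ)⁻¹ : ℝ) : EReal) *
      elog (S n ⟨1, lt_of_lt_of_le (by norm_num) hp⟩ ⟨1, lt_of_lt_of_le (by norm_num) hp⟩)) Filter.atTop (nhds lam2))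
    (hlt : lam2 < (L1 : EReal))
    (hsub : ∀ ε : ℝ, 0 < ε → ∀ᶠ n in Filter.atTop, ∀ i j k,
      Mprod A n j k = 0 ∨ Mprod A n i k ≤ Real.exp (ε * n) * Mprod A n j k) :
    ∃ v : Fin p → ℝ, (∀ j, Filter.Tendsto (fun n => nall (Mprod A n) j) Filter.atTop (nhds (v j)))
      ∧ (∀ j, 0 < v j) ∧
      ∀ x w : Fin p → ℝ, (∀ j, 0 ≤ w j) → w ≠ 0 → ∀ i : Fin p,
        Filter.limsup (fun n : ℕ => (((n : ℝ)⁻¹ : ℝ) : EReal) * elog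
            |(Mprod A n).mulVec x i / (Mprod A n).mulVec w i -
              (∑ j, v j * x j) / (∑ j, v j * w j)|)
          (Filter.atTop ⊓ Filter.principal {n : ℕ | Mprod A n i ≠ 0})
          ≤ lam2 - (L1 : EReal) := by
  set i0 : Fin p := ⟨0, lt_of_lt_of_le (by norm_num) hp⟩ with hi0
  set i1 : Fin p := ⟨1, lt_of_lt_of_le (by norm_num) hp⟩ with hi1
  have hnn : ∀ n i j, 0 ≤ Mprod A n i j := mprod_nonneg hA
  -- total sums are positive
  have hts : ∀ n, 0 < tsum' (Mprod A n) := by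
    intro n
    obtain ⟨i, hi⟩ := mprod_col_pos hA n i0
    have h1 : Mprod A n i i0 ≤ rsum (Mprod A n) i :=
      Finset.single_le_sum (fun j _ => hnn n i j) (Finset.mem_univ i0)
    have h2 : rsum (Mprod A n) i ≤ tsum' (Mprod A n) := by
      rw [tsum'_eq]
      exact Finset.single_le_sum (fun k _ => rsum_nonneg (hnn n) k) (Finset.mem_univ i)
    linarith
  set Cp : ℝ := 100 * (p : ℝ)^7 with hCpdef
  have hCp : 0 < Cp := by rw [hCpdef]; positivity
  -- eventual bounds on singular values
  have hσ2nn : ∀ n, 0 ≤ S n i1 i1 := by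
    intro n
    obtain ⟨U, V, hsvd⟩ := hS n
    exact hsvd.2.2.2.2.2.1 i1
  have hev1 : ∀ ε : ℝ, 0 < ε → ∀ᶠ n : ℕ in atTop, Real.exp ((L1 - ε) * (n:ℝ)) ≤ S n i0 i0 := by
    intro ε hε
    have hlt' : ((L1 - ε : ℝ) : EReal) < (L1 : EReal) := by
      rw [EReal.coe_lt_coe_iff]; linarith
    filter_upwards [hl1.eventually_const_lt hlt', eventually_ge_atTop 1] with n h hn
    exact aux_lower hn h
  have hev2 : ∀ c2 : ℝ, lam2 < (c2 : EReal) → ∀ᶠ n : ℕ in atTop,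
      S n i1 i1 ≤ Real.exp (c2 * (n:ℝ)) := by
    intro c2 hc2
    filter_upwards [hl2.eventually_lt_const hc2, eventually_ge_atTop 1] with n h hn
    exact aux_upper hn (hσ2nn n) h
  -- the diameter bound
  have hDiam : ∀ β : ℝ, lam2 - (L1 : EReal) < (β : EReal) → ∀ᶠ n in atTop,
      ∀ y z, InHull (Mprod A n) y → InHull (Mprod A n) z →
        ∀ j, |y j - z j| ≤ Cp * Real.exp (β * n) := by
    intro β hβ
    have hβ' : lam2 < ((L1 + β : ℝ) : EReal) := by
      induction lam2 with
      | bot => exact bot_lt_iff_ne_bot.mpr (by simp)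
      | top => exact absurd hlt (by simp)
      | coe L2 =>
        rw [show ((L2 : ℝ) : EReal) - (L1 : EReal) = ((L2 - L1 : ℝ) : EReal) from
          (EReal.coe_sub _ _).symm, EReal.coe_lt_coe_iff] at hβ
        rw [EReal.coe_lt_coe_iff]
        linarith
    obtain ⟨c2, hc2a, hc2b⟩ := EReal.exists_between_coe_real hβ'
    have hc2b' : c2 < L1 + β := EReal.coe_lt_coe_iff.mp hc2b
    set ε : ℝ := (β - (c2 - L1)) / 3 with hεdef
    have hε : 0 < ε := by rw [hεdef]; linarith
    have hεn3 : 3 * ε = β - c2 + L1 := by rw [hεdef]; ring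
    filter_upwards [hev1 ε hε, hev2 c2 hc2a, hsub ε hε, eventually_ge_atTop τ0,
      eventually_ge_atTop 1] with n h1 h2 h3 hτn hn1
    intro y z hy hz j
    obtain ⟨U, V, hsvd⟩ := hS n
    have hrz : RowsPosOrZero (Mprod A n) := mprod_rowsPosOrZero hA hτ hτn
    have hM0 : ∃ a b, 0 < Mprod A n a b := by
      obtain ⟨a, ha⟩ := mprod_col_pos hA n i0
      exact ⟨a, i0, ha⟩
    have htexp : (1:ℝ) ≤ Real.exp (ε * n) := by
      rw [Real.one_le_exp_iff]
      positivity
    have hd : ∀ k l jj, rsum (Mprod A n) k ≠ 0 → rsum (Mprod A n) l ≠ 0 →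
        |nrow (Mprod A n) k jj - nrow (Mprod A n) l jj| ≤
          (100 * (p:ℝ)^7) * (Real.exp (ε * n))^2 * (S n i1 i1 / S n i0 i0) := by
      intro k l jj hk hl
      exact lemB hp hsvd (hnn n) hrz hM0 htexp (h3) hk hl jj
    have hbd := hull_diff_bound hd hy hz j
    refine hbd.trans ?_
    have hσ1pos : 0 < S n i0 i0 := lt_of_lt_of_le (Real.exp_pos _) h1
    have hfrac : S n i1 i1 / S n i0 i0 ≤
        Real.exp (c2 * (n:ℝ)) / Real.exp ((L1 - ε) * (n:ℝ)) :=
      div_le_div₀ (Real.exp_nonneg _) h2 (Real.exp_pos _) h1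
    have hexpeq : (Real.exp (ε * n))^2 * (Real.exp (c2 * (n:ℝ)) / Real.exp ((L1 - ε) * (n:ℝ)))
        = Real.exp (β * n) := by
      rw [sq, ← Real.exp_add, div_eq_mul_inv, ← Real.exp_neg, ← Real.exp_add, ← Real.exp_add]
      congr 1
      linear_combination (n : ℝ) * hεn3
    calc (100 * (p:ℝ)^7) * (Real.exp (ε * n))^2 * (S n i1 i1 / S n i0 i0)
        ≤ (100 * (p:ℝ)^7) * (Real.exp (ε * n))^2
            * (Real.exp (c2 * (n:ℝ)) / Real.exp ((L1 - ε) * (n:ℝ))) := by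
          refine mul_le_mul_of_nonneg_left hfrac (by positivity)
      _ = Cp * Real.exp (β * n) := by
          rw [mul_assoc, hexpeq, hCpdef]
  -- convergence of the normalized column sums
  have hβ0 : ∃ β0 : ℝ, lam2 - (L1 : EReal) < (β0 : EReal) ∧ β0 < 0 := by
    have h0 : lam2 - (L1 : EReal) < ((0:ℝ) : EReal) := by
      induction lam2 with
      | bot => exact bot_lt_iff_ne_bot.mpr (by simp)
      | top => exact absurd hlt (by simp)
      | coe L2 =>
        rw [show ((L2 : ℝ) : EReal) - (L1 : EReal) = ((L2 - L1 : ℝ) : EReal) from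
          (EReal.coe_sub _ _).symm, EReal.coe_lt_coe_iff]
        rw [EReal.coe_lt_coe_iff] at hlt
        linarith
    obtain ⟨β0, hb1, hb2⟩ := EReal.exists_between_coe_real h0
    exact ⟨β0, hb1, EReal.coe_lt_coe_iff.mp hb2⟩
  obtain ⟨β0, hβ0a, hβ0b⟩ := hβ0
  have hto0 : Filter.Tendsto (fun n : ℕ => Cp * Real.exp (β0 * n)) atTop (nhds 0) := by
    have h1 : Filter.Tendsto (fun n : ℕ => β0 * (n:ℝ)) atTop atBot :=
      Filter.Tendsto.const_mul_atTop_of_neg hβ0b tendsto_natCast_atTop_atTop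
    have h2 : Filter.Tendsto (fun n : ℕ => Real.exp (β0 * n)) atTop (nhds 0) :=
      Real.tendsto_exp_atBot.comp h1
    simpa using h2.const_mul Cp
  have hInHull_self : ∀ n, InHull (Mprod A n) (nall (Mprod A n)) :=
    fun n => inHull_nall (hnn n) (hts n).ne'
  have hInHull_future : ∀ {n m : ℕ}, n ≤ m → InHull (Mprod A n) (nall (Mprod A m)) := by
    intro n m hnm
    obtain ⟨P, hP, hPe⟩ := mprod_factor hA hnm
    rw [hPe]
    exact inHull_nall_mul hP (hnn n) (by rw [← hPe]; exact (hts m).ne')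
  have hcauchy : ∀ j, ∃ l, Filter.Tendsto (fun n => nall (Mprod A n) j) atTop (nhds l) := by
    intro j
    refine cauchySeq_tendsto_of_complete ?_
    rw [Metric.cauchySeq_iff']
    intro ε hε
    have hev : ∀ᶠ N : ℕ in atTop, (∀ y z, InHull (Mprod A N) y → InHull (Mprod A N) z →
        ∀ j, |y j - z j| ≤ Cp * Real.exp (β0 * N)) ∧ Cp * Real.exp (β0 * N) < ε :=
      (hDiam β0 hβ0a).and (hto0.eventually_lt_const hε)
    obtain ⟨N, hN⟩ := hev.exists
    refine ⟨N, fun n hn => ?_⟩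
    rw [Real.dist_eq]
    exact lt_of_le_of_lt
      (hN.1 _ _ (hInHull_future hn) (hInHull_self N) j) hN.2
  choose v hv using hcauchy
  -- positivity
  set G : Finset (Fin p) := Finset.univ.filter (fun k => rsum (Mprod A τ0) k ≠ 0) with hGdef
  have hGne : G.Nonempty := by
    obtain ⟨i, hi⟩ := mprod_col_pos hA τ0 i0
    refine ⟨i, ?_⟩
    rw [hGdef, Finset.mem_filter]
    refine ⟨Finset.mem_univ i, ?_⟩
    have h1 : Mprod A τ0 i i0 ≤ rsum (Mprod A τ0) i :=
      Finset.single_le_sum (fun j _ => hnn τ0 i j) (Finset.mem_univ i0)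
    intro h0
    rw [h0] at h1
    exact absurd (lt_of_lt_of_le hi h1) (lt_irrefl _)
  set δ : Fin p → ℝ := fun j => G.inf' hGne (fun k => nrow (Mprod A τ0) k j) with hδdef
  have hδpos : ∀ j, 0 < δ j := by
    intro j
    rw [hδdef]
    rw [Finset.lt_inf'_iff]
    intro k hk
    rw [hGdef, Finset.mem_filter] at hk
    have hkne := hk.2
    have hkpos : 0 < rsum (Mprod A τ0) k :=
      lt_of_le_of_ne (rsum_nonneg (hnn τ0) k) (Ne.symm hkne)
    have hrowpos : ∀ jj, 0 < Mprod A τ0 k jj := by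
      rcases hτ k with h | h
      · exact h
      · exact absurd (Finset.sum_eq_zero fun jj _ => h jj) hkne
    exact div_pos (hrowpos j) hkpos
  have hhull_lb : ∀ y, InHull (Mprod A τ0) y → ∀ j, δ j ≤ y j := by
    intro y hy j
    obtain ⟨μ, hμ0, hμ1, hμs, hμe⟩ := hy
    have hterm : ∀ k, μ k * δ j ≤ μ k * nrow (Mprod A τ0) k j := by
      intro k
      by_cases hk : rsum (Mprod A τ0) k = 0
      · simp [hμs k hk]
      · refine mul_le_mul_of_nonneg_left ?_ (hμ0 k)
        rw [hδdef]
        exact Finset.inf'_le _ (by rw [hGdef, Finset.mem_filter]; exact ⟨Finset.mem_univ k, hk⟩)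
    calc δ j = ∑ k, μ k * δ j := by rw [← Finset.sum_mul, hμ1, one_mul]
      _ ≤ ∑ k, μ k * nrow (Mprod A τ0) k j := Finset.sum_le_sum fun k _ => hterm k
      _ = y j := (hμe j).symm
  have hvlb : ∀ j, δ j ≤ v j := by
    intro j
    refine ge_of_tendsto (hv j) ?_
    filter_upwards [eventually_ge_atTop τ0] with n hn
    exact hhull_lb _ (hInHull_future hn) j
  have hsum1 : ∑ j, v j = 1 := by
    have h1 : Filter.Tendsto (fun n => ∑ j, nall (Mprod A n) j) atTop (nhds (∑ j, v j)) :=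
      tendsto_finset_sum _ (fun j _ => hv j)
    have h2 : ∀ n, ∑ j, nall (Mprod A n) j = 1 := by
      intro n
      unfold nall
      rw [← Finset.sum_div, Finset.sum_comm]
      exact div_self (hts n).ne'
    have h3 : Filter.Tendsto (fun n : ℕ => ∑ j, nall (Mprod A n) j) atTop (nhds 1) := by
      simp only [h2]
      exact tendsto_const_nhds
    exact tendsto_nhds_unique h1 h3
  have hvle1 : ∀ j, v j ≤ 1 := by
    intro j
    rw [← hsum1]
    exact Finset.single_le_sum (fun k _ => (lt_of_lt_of_le (hδpos k) (hvlb k)).le)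
      (Finset.mem_univ j)
  -- closeness of normalized rows to v
  have hclose : ∀ β : ℝ, lam2 - (L1 : EReal) < (β : EReal) → ∀ᶠ n in atTop,
      ∀ i, rsum (Mprod A n) i ≠ 0 → ∀ j, |nrow (Mprod A n) i j - v j| ≤ Cp * Real.exp (β * n) := by
    intro β hβ
    filter_upwards [hDiam β hβ, eventually_ge_atTop τ0] with n hdprop hτn
    intro i hi j
    have hlim : Filter.Tendsto (fun m => |nrow (Mprod A n) i j - nall (Mprod A m) j|) atTop
        (nhds |nrow (Mprod A n) i j - v j|) :=
      (tendsto_const_nhds.sub (hv j)).abs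
    refine le_of_tendsto hlim ?_
    filter_upwards [eventually_ge_atTop n] with m hm
    exact hdprop _ _ (inHull_nrow hi) (hInHull_future hm) j
  refine ⟨v, hv, fun j => lt_of_lt_of_le (hδpos j) (hvlb j), ?_⟩
  intro x w hw hw0 i
  obtain ⟨j0, hj0⟩ : ∃ j0, 0 < w j0 := by
    by_contra hcon
    push_neg at hcon
    exact hw0 (funext fun j => le_antisymm (hcon j) (hw j))
  set sx : ℝ := ∑ j, |x j| with hsxdef
  set sw : ℝ := ∑ j, w j with hswdef
  set bw : ℝ := ∑ j, δ j * w j with hbwdef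
  have hsx : 0 ≤ sx := Finset.sum_nonneg fun j _ => abs_nonneg _
  have hsw : 0 ≤ sw := Finset.sum_nonneg fun j _ => hw j
  have hbw : 0 < bw := by
    rw [hbwdef]
    exact Finset.sum_pos' (fun j _ => mul_nonneg (hδpos j).le (hw j))
      ⟨j0, Finset.mem_univ j0, mul_pos (hδpos j0) hj0⟩
  have hBv_lb : bw ≤ ∑ j, v j * w j := by
    rw [hbwdef]
    exact Finset.sum_le_sum fun j _ => mul_le_mul_of_nonneg_right (hvlb j) (hw j)
  have hBv_ub : (∑ j, v j * w j) ≤ sw := by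
    rw [hswdef]
    refine Finset.sum_le_sum fun j _ => ?_
    nlinarith [hvle1 j, hw j, ((hδpos j).trans_le (hvlb j)).le]
  have hBvpos : (0:ℝ) < ∑ j, v j * w j := lt_of_lt_of_le hbw hBv_lb
  have hA'abs : |∑ j, v j * x j| ≤ sx := by
    rw [hsxdef]
    calc |∑ j, v j * x j| ≤ ∑ j, |v j * x j| := Finset.abs_sum_le_sum_abs _ _
      _ ≤ ∑ j, |x j| := by
          refine Finset.sum_le_sum fun j _ => ?_
          rw [abs_mul]
          have hv01 : |v j| ≤ 1 := by
            rw [abs_of_pos ((hδpos j).trans_le (hvlb j))]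
            exact hvle1 j
          nlinarith [abs_nonneg (x j)]
  set K : ℝ := 2 * sx * sw / bw^2 + 1 with hKdef
  have hK : 0 < K := by rw [hKdef]; positivity
  have hmain : ∀ β : ℝ, lam2 - (L1 : EReal) < (β : EReal) →
      Filter.limsup (fun n : ℕ => (((n : ℝ)⁻¹ : ℝ) : EReal) * elog
          |(Mprod A n).mulVec x i / (Mprod A n).mulVec w i -
            (∑ j, v j * x j) / (∑ j, v j * w j)|)
        (Filter.atTop ⊓ Filter.principal {n : ℕ | Mprod A n i ≠ 0}) ≤ (β : EReal) := by
    intro β hβ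
    refine limsup_aux inf_le_left _ (K := K * Cp) ?_
    rw [eventually_inf_principal]
    filter_upwards [hclose β hβ, eventually_ge_atTop 1, eventually_ge_atTop τ0] with n hcl hn1 hτn
    intro hmem
    have hmem' : Mprod A n i ≠ 0 := hmem
    have hrs : rsum (Mprod A n) i ≠ 0 := by
      intro h0
      exact hmem' (funext fun jj => row_eq_zero_of_rsum (hnn n) h0 jj)
    have hclu := hcl i hrs
    have hulb : ∀ j, δ j ≤ nrow (Mprod A n) i j := by
      intro j
      obtain ⟨P, hP, hPe⟩ := mprod_factor hA hτn
      refine hhull_lb _ ?_ j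
      rw [hPe]
      exact inHull_nrow_mul hP (hnn τ0) (by rw [← hPe]; exact hrs)
    have hBu_lb : bw ≤ ∑ j, nrow (Mprod A n) i j * w j := by
      rw [hbwdef]
      exact Finset.sum_le_sum fun j _ => mul_le_mul_of_nonneg_right (hulb j) (hw j)
    have hBupos : (0:ℝ) < ∑ j, nrow (Mprod A n) i j * w j := lt_of_lt_of_le hbw hBu_lb
    have hmv : ∀ y : Fin p → ℝ, (Mprod A n).mulVec y i
        = rsum (Mprod A n) i * (∑ j, nrow (Mprod A n) i j * y j) := by
      intro y
      have h1 : (Mprod A n).mulVec y i = ∑ j, Mprod A n i j * y j := by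
        simp [Matrix.mulVec, dotProduct]
      rw [h1, Finset.mul_sum]
      refine Finset.sum_congr rfl fun j _ => ?_
      rw [key_ident (hnn n) i j]
      ring
    have hratio : (Mprod A n).mulVec x i / (Mprod A n).mulVec w i
        = (∑ j, nrow (Mprod A n) i j * x j) / (∑ j, nrow (Mprod A n) i j * w j) := by
      rw [hmv x, hmv w, mul_div_mul_left _ _ hrs]
    have hAd : |(∑ j, nrow (Mprod A n) i j * x j) - ∑ j, v j * x j|
        ≤ Cp * Real.exp (β * n) * sx := by
      have he : (∑ j, nrow (Mprod A n) i j * x j) - (∑ j, v j * x j)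
          = ∑ j, (nrow (Mprod A n) i j - v j) * x j := by
        rw [← Finset.sum_sub_distrib]
        exact Finset.sum_congr rfl fun j _ => by ring
      rw [he]
      calc |∑ j, (nrow (Mprod A n) i j - v j) * x j|
          ≤ ∑ j, |(nrow (Mprod A n) i j - v j) * x j| := Finset.abs_sum_le_sum_abs _ _
        _ ≤ ∑ j, Cp * Real.exp (β * n) * |x j| := by
            refine Finset.sum_le_sum fun j _ => ?_
            rw [abs_mul]
            exact mul_le_mul_of_nonneg_right (hclu j) (abs_nonneg _)
        _ = Cp * Real.exp (β * n) * sx := by rw [hsxdef, Finset.mul_sum]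
    have hBd : |(∑ j, nrow (Mprod A n) i j * w j) - ∑ j, v j * w j|
        ≤ Cp * Real.exp (β * n) * sw := by
      have he : (∑ j, nrow (Mprod A n) i j * w j) - (∑ j, v j * w j)
          = ∑ j, (nrow (Mprod A n) i j - v j) * w j := by
        rw [← Finset.sum_sub_distrib]
        exact Finset.sum_congr rfl fun j _ => by ring
      rw [he]
      calc |∑ j, (nrow (Mprod A n) i j - v j) * w j|
          ≤ ∑ j, |(nrow (Mprod A n) i j - v j) * w j| := Finset.abs_sum_le_sum_abs _ _
        _ ≤ ∑ j, Cp * Real.exp (β * n) * w j := by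
            refine Finset.sum_le_sum fun j _ => ?_
            rw [abs_mul, abs_of_nonneg (hw j)]
            exact mul_le_mul_of_nonneg_right (hclu j) (hw j)
        _ = Cp * Real.exp (β * n) * sw := by rw [hswdef, Finset.mul_sum]
    have hdiffbd : |(Mprod A n).mulVec x i / (Mprod A n).mulVec w i -
        (∑ j, v j * x j) / (∑ j, v j * w j)| ≤ K * Cp * Real.exp (β * n) := by
      rw [hratio]
      set Au : ℝ := ∑ j, nrow (Mprod A n) i j * x j with hAudef
      set Bu : ℝ := ∑ j, nrow (Mprod A n) i j * w j with hBudef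
      set Av : ℝ := ∑ j, v j * x j with hAvdef
      set Bv : ℝ := ∑ j, v j * w j with hBvdef
      have hid : Au / Bu - Av / Bv = ((Au - Av) * Bv + Av * (Bv - Bu)) / (Bu * Bv) := by
        field_simp
        ring
      rw [hid, abs_div, abs_of_pos (mul_pos hBupos hBvpos)]
      have ht1 : |(Au - Av) * Bv| ≤ Cp * Real.exp (β * n) * sx * sw := by
        rw [abs_mul, abs_of_pos hBvpos]
        exact mul_le_mul hAd hBv_ub hBvpos.le (by positivity)
      have ht2 : |Av * (Bv - Bu)| ≤ sx * (Cp * Real.exp (β * n) * sw) := by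
        rw [abs_mul, abs_sub_comm]
        exact mul_le_mul hA'abs hBd (abs_nonneg _) hsx
      have hnum : |(Au - Av) * Bv + Av * (Bv - Bu)|
          ≤ Cp * Real.exp (β * n) * sx * sw + sx * (Cp * Real.exp (β * n) * sw) :=
        (abs_add_le _ _).trans (add_le_add ht1 ht2)
      have hden : bw * bw ≤ Bu * Bv := mul_le_mul hBu_lb hBv_lb hbw.le hBupos.le
      calc |(Au - Av) * Bv + Av * (Bv - Bu)| / (Bu * Bv)
          ≤ (Cp * Real.exp (β * n) * sx * sw + sx * (Cp * Real.exp (β * n) * sw)) / (bw * bw) :=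
            div_le_div₀ (by positivity) hnum (by positivity) hden
        _ = 2 * sx * sw / bw^2 * (Cp * Real.exp (β * n)) := by
            field_simp
            ring
        _ ≤ K * Cp * Real.exp (β * n) := by
            rw [hKdef]
            have he0 : (0:ℝ) ≤ Cp * Real.exp (β * n) := by positivity
            nlinarith [he0]
    -- conclude the elog bound
    rcases le_or_gt |(Mprod A n).mulVec x i / (Mprod A n).mulVec w i -
        (∑ j, v j * x j) / (∑ j, v j * w j)| 0 with hle | hpos
    · have hbot : elog |(Mprod A n).mulVec x i / (Mprod A n).mulVec w i -
          (∑ j, v j * x j) / (∑ j, v j * w j)| = ⊥ := by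
        unfold elog
        rw [if_pos hle]
      rw [hbot]
      have hninv : (0:ℝ) < (n:ℝ)⁻¹ := by
        have : (0:ℝ) < (n:ℝ) := by exact_mod_cast hn1
        positivity
      rw [EReal.coe_mul_bot_of_pos hninv]
      exact bot_le
    · have hKCp : (0:ℝ) < K * Cp := mul_pos hK hCp
      have hlog : Real.log |(Mprod A n).mulVec x i / (Mprod A n).mulVec w i -
          (∑ j, v j * x j) / (∑ j, v j * w j)| ≤ Real.log (K * Cp) + β * n := by
        have h1 := (Real.log_le_log_iff hpos (by positivity)).mpr hdiffbd
        rwa [Real.log_mul hKCp.ne' (Real.exp_ne_zero _), Real.log_exp] at h1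
      have helog : elog |(Mprod A n).mulVec x i / (Mprod A n).mulVec w i -
          (∑ j, v j * x j) / (∑ j, v j * w j)|
          = ((Real.log |(Mprod A n).mulVec x i / (Mprod A n).mulVec w i -
            (∑ j, v j * x j) / (∑ j, v j * w j)| : ℝ) : EReal) := by
        unfold elog
        rw [if_neg (not_le.mpr hpos)]
      rw [helog, ← EReal.coe_mul, EReal.coe_le_coe_iff]
      have hnR : (0:ℝ) < (n:ℝ) := by exact_mod_cast hn1
      have heq : (n:ℝ)⁻¹ * (Real.log (K * Cp) + β * n) = (n:ℝ)⁻¹ * Real.log (K * Cp) + β := by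
        field_simp
      calc (n:ℝ)⁻¹ * Real.log |(Mprod A n).mulVec x i / (Mprod A n).mulVec w i -
            (∑ j, v j * x j) / (∑ j, v j * w j)|
          ≤ (n:ℝ)⁻¹ * (Real.log (K * Cp) + β * n) :=
            mul_le_mul_of_nonneg_left hlog (by positivity)
        _ = (n:ℝ)⁻¹ * Real.log (K * Cp) + β := heq
  by_contra hcon
  push_neg at hcon
  obtain ⟨β, hβ1, hβ2⟩ := EReal.exists_between_coe_real hcon
  exact absurd (hmain β hβ1) (not_le.mpr hβ2)

end Core

section Wrapper

open Filter

lemma measurable_mprod {p : ℕ} {Ω : Type*} [MeasurableSpace Ω]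
    (AP : Ω → ℕ → Matrix (Fin p) (Fin p) ℝ)
    (hAmeas : ∀ n i j, Measurable (fun ω => AP ω n i j)) :
    ∀ n i j, Measurable fun ω => Mprod (AP ω) n i j := by
  intro n
  induction n with
  | zero =>
    intro i j
    have : (fun ω => Mprod (AP ω) 0 i j) = fun _ => (1 : Matrix (Fin p) (Fin p) ℝ) i j := rfl
    rw [this]
    exact measurable_const
  | succ n ih =>
    intro i j
    have : (fun ω => Mprod (AP ω) (n+1) i j)
        = fun ω => ∑ k, AP ω n i k * Mprod (AP ω) n k j := by
      funext ω
      rw [mprod_succ, Matrix.mul_apply]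
    rw [this]
    exact Finset.measurable_sum _ fun k _ => (hAmeas n i k).mul (ih k j)

end Wrapper

/-- Under the hypotheses of Statement 0, with a positive spectral gap
`lam1 - lam2 > 0` and the weak subexponentiality condition on ratios of entries of `Mₙ`,
there is a measurable random vector `v¹`, a.s. strictly positive, such that for every
`x ∈ ℝᵖ`, every nonnegative nonzero `w`, and every row index `i`, almost surely
`limsup_{n → ∞, eᵢᵀMₙ ≠ 0} (1/n) log |(eᵢᵀMₙx)/(eᵢᵀMₙw) − (v¹·x)/(v¹·w)| ≤ -(lam1 - lam2)`. -/
theorem statement2 {p : ℕ} (hp : 2 ≤ p) {Ω : Type*} [MeasurableSpace Ω]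
    (μ : Measure Ω) [IsProbabilityMeasure μ]
    (T : Ω → Ω) (hT : Ergodic T μ)
    (AP : Ω → ℕ → Matrix (Fin p) (Fin p) ℝ)
    (hAmeas : ∀ n i j, Measurable (fun ω => AP ω n i j))
    (hstat : ∀ ω n, AP ω (n + 1) = AP (T ω) n)
    (hallow : ∀ᵐ ω ∂μ, ∀ n, ColAllowable (AP ω n))
    (hint : ∫⁻ ω, ENNReal.ofReal (max (Real.log (matNorm (AP ω 0))) 0) ∂μ < ⊤)
    (τ : Ω → ℕ) (hτmeas : Measurable τ)
    (hprim : ∀ᵐ ω ∂μ, RowsPosOrZero (Mprod (AP ω) (τ ω)))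
    (S : Ω → ℕ → Matrix (Fin p) (Fin p) ℝ)
    (hSVD : ∀ᵐ ω ∂μ, ∀ n, ∃ U V, IsSVD (Mprod (AP ω) n) U (S ω n) V)
    (lam1 lam2 : EReal) (hlam1top : lam1 ≠ ⊤) (hlam2top : lam2 ≠ ⊤)
    (hlam1 : ∀ᵐ ω ∂μ, Tendsto
      (fun n : ℕ => (((n : ℝ)⁻¹ : ℝ) : EReal) * elog (S ω n ⟨0, by omega⟩ ⟨0, by omega⟩))
      atTop (nhds lam1))
    (hlam2 : ∀ᵐ ω ∂μ, Tendsto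
      (fun n : ℕ => (((n : ℝ)⁻¹ : ℝ) : EReal) * elog (S ω n ⟨1, by omega⟩ ⟨1, by omega⟩))
      atTop (nhds lam2))
    (hgap : (0 : EReal) < lam1 - lam2)
    (hsub : ∀ i j k : Fin p, ∀ ε : ℝ, 0 < ε → ∀ᵐ ω ∂μ, ∀ᶠ n in atTop,
      Mprod (AP ω) n j k = 0 ∨
        Mprod (AP ω) n i k ≤ Real.exp (ε * n) * Mprod (AP ω) n j k) :
    ∃ v1 : Ω → Fin p → ℝ, Measurable v1 ∧ (∀ᵐ ω ∂μ, ∀ i, 0 < v1 ω i) ∧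
      ∀ x w : Fin p → ℝ, (∀ i, 0 ≤ w i) → w ≠ 0 → ∀ i : Fin p,
        ∀ᵐ ω ∂μ,
          Filter.limsup (fun n : ℕ => (((n : ℝ)⁻¹ : ℝ) : EReal) * elog
              |(Mprod (AP ω) n).mulVec x i / (Mprod (AP ω) n).mulVec w i -
                (∑ j, v1 ω j * x j) / (∑ j, v1 ω j * w j)|)
            (atTop ⊓ Filter.principal {n : ℕ | Mprod (AP ω) n i ≠ 0})
            ≤ -(lam1 - lam2) := by
  classical
  -- lam1 is a real number
  have hlam1bot : lam1 ≠ ⊥ := by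
    intro h
    rw [h, EReal.bot_sub] at hgap
    exact absurd hgap (by simp)
  set L1 : ℝ := lam1.toReal with hL1def
  have hL1 : lam1 = (L1 : EReal) := (EReal.coe_toReal hlam1top hlam1bot).symm
  have hlt : lam2 < (L1 : EReal) := by
    rw [hL1] at hgap
    induction lam2 with
    | bot => exact bot_lt_iff_ne_bot.mpr (by simp)
    | top => rw [EReal.sub_top] at hgap; exact absurd hgap (by simp)
    | coe L2 =>
      rw [show (L1 : EReal) - (L2 : EReal) = ((L1 - L2 : ℝ) : EReal) from
        (EReal.coe_sub _ _).symm] at hgap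
      rw [EReal.coe_lt_coe_iff]
      have := EReal.coe_lt_coe_iff.mp (by exact_mod_cast hgap : ((0:ℝ) : EReal) < _)
      linarith
  have hneg : -(lam1 - lam2) = lam2 - (L1 : EReal) := by
    rw [hL1]
    induction lam2 with
    | bot => rw [EReal.coe_sub_bot, EReal.neg_top, EReal.bot_sub]
    | top => exact absurd hlt (by simp)
    | coe L2 =>
      rw [show (L1 : EReal) - (L2 : EReal) = ((L1 - L2 : ℝ) : EReal) from
        (EReal.coe_sub _ _).symm,
        show (L2 : EReal) - (L1 : EReal) = ((L2 - L1 : ℝ) : EReal) from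
        (EReal.coe_sub _ _).symm, ← EReal.coe_neg]
      norm_num
  -- define v1 as coordinatewise limsup
  set v1 : Ω → Fin p → ℝ :=
    fun ω j => Filter.limsup (fun n => nall (Mprod (AP ω) n) j) atTop with hv1def
  have hMmeas : ∀ n i j, Measurable fun ω => Mprod (AP ω) n i j := measurable_mprod AP hAmeas
  have hnallmeas : ∀ n j, Measurable fun ω => nall (Mprod (AP ω) n) j := by
    intro n j
    unfold nall tsum'
    exact (Finset.measurable_sum _ fun k _ => hMmeas n k j).div
      (Finset.measurable_sum _ fun k _ => Finset.measurable_sum _ fun l _ => hMmeas n k l)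
  have hv1meas : Measurable v1 := by
    rw [hv1def]
    refine measurable_pi_lambda _ fun j => ?_
    exact Measurable.limsup (fun n => hnallmeas n j)
  -- almost-sure subexponentiality, uniformly over rational ε
  have hsubae : ∀ᵐ ω ∂μ, ∀ q : ℚ, 0 < q → ∀ i j k : Fin p, ∀ᶠ n in atTop,
      Mprod (AP ω) n j k = 0 ∨
        Mprod (AP ω) n i k ≤ Real.exp ((q:ℝ) * n) * Mprod (AP ω) n j k := by
    rw [MeasureTheory.ae_all_iff]
    intro q
    by_cases hq : 0 < q
    · have h2 : ∀ᵐ ω ∂μ, ∀ i j k : Fin p, ∀ᶠ n in atTop,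
          Mprod (AP ω) n j k = 0 ∨
            Mprod (AP ω) n i k ≤ Real.exp ((q:ℝ) * n) * Mprod (AP ω) n j k := by
        rw [MeasureTheory.ae_all_iff]
        intro i
        rw [MeasureTheory.ae_all_iff]
        intro j
        rw [MeasureTheory.ae_all_iff]
        intro k
        exact hsub i j k (q:ℝ) (by exact_mod_cast hq)
      filter_upwards [h2] with ω hω _ using hω
    · exact MeasureTheory.ae_of_all _ fun ω hq' => absurd hq' hq
  -- the good event
  have hgood : ∀ᵐ ω ∂μ, (∀ j, 0 < v1 ω j) ∧
      ∀ x w : Fin p → ℝ, (∀ j, 0 ≤ w j) → w ≠ 0 → ∀ i : Fin p,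
        Filter.limsup (fun n : ℕ => (((n : ℝ)⁻¹ : ℝ) : EReal) * elog
            |(Mprod (AP ω) n).mulVec x i / (Mprod (AP ω) n).mulVec w i -
              (∑ j, v1 ω j * x j) / (∑ j, v1 ω j * w j)|)
          (atTop ⊓ Filter.principal {n : ℕ | Mprod (AP ω) n i ≠ 0})
          ≤ lam2 - (L1 : EReal) := by
    filter_upwards [hallow, hprim, hSVD, hlam1, hlam2, hsubae] with ω hω1 hω2 hω3 hω4 hω5 hω6
    have hsubω : ∀ ε : ℝ, 0 < ε → ∀ᶠ n in atTop, ∀ i j k : Fin p,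
        Mprod (AP ω) n j k = 0 ∨
          Mprod (AP ω) n i k ≤ Real.exp (ε * n) * Mprod (AP ω) n j k := by
      intro ε hε
      obtain ⟨q, hq1, hq2⟩ := exists_rat_btwn hε
      have hq0 : 0 < q := by exact_mod_cast hq1
      have hall : ∀ᶠ n in atTop, ∀ i j k : Fin p,
          Mprod (AP ω) n j k = 0 ∨
            Mprod (AP ω) n i k ≤ Real.exp ((q:ℝ) * n) * Mprod (AP ω) n j k :=
        eventually_all.mpr fun i => eventually_all.mpr fun j => eventually_all.mpr fun k =>
          hω6 q hq0 i j k
      filter_upwards [hall] with n hn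
      intro i j k
      rcases hn i j k with h | h
      · exact Or.inl h
      · right
        refine h.trans ?_
        refine mul_le_mul_of_nonneg_right ?_ (mprod_nonneg hω1 n j k)
        refine Real.exp_le_exp.mpr ?_
        have hn0 : (0:ℝ) ≤ (n:ℝ) := Nat.cast_nonneg n
        nlinarith [hq2.le]
    rw [hL1] at hω4
    obtain ⟨v, hva, hvb, hvc⟩ :=
      core hp (AP ω) hω1 (τ ω) hω2 (S ω) hω3 L1 lam2 hω4 hω5 hlt hsubω
    have hv1eq : v1 ω = v := by
      rw [hv1def]
      exact funext fun j => (hva j).limsup_eq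
    rw [hv1eq]
    exact ⟨hvb, hvc⟩
  refine ⟨v1, hv1meas, ?_, ?_⟩
  · filter_upwards [hgood] with ω h using h.1
  · intro x w hw hw0 i
    filter_upwards [hgood] with ω h
    rw [hneg]
    exact h.2 x w hw hw0 i
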